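/- For all real numbers v₁, v₂, v₃, w with 0 ≤ v₃ ≤ v₂ ≤ v₁ ≤ 1 and 0 ≤ w ≤ 1, the inequality 2·δ(w, v₁, v₂) ≥ δ(max(v₂, w), v₁, v₃) + δ(max(v₁, w), v₂, v₃) holds. (In words: for the split attack, the truthful-minus-attack utility difference evaluated at a given adversary profile is at least the average over 'flipping' one of the two top one-item adversary bids to a two-item bid, which is the pointwise core of the monotonicity in k of the expected utility difference.) -/
import Mathlib


/-- Truthful minus split-attack utility of a bidder of true type (2,1) submitting the
false-name bids (1,1),(1,1), when the two highest one-item adversary per-item values are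
`a ≥ b` and the highest two-item adversary per-item value is `w`. -/
noncomputable def delta (w a b : ℝ) : ℝ :=
  if w ≤ (a + b) / 2 then a - b
  else if w ≤ (1 + a) / 2 then 2 * a - 2 * w
  else 2 * w - 2

theorem stmt_11 (v₁ v₂ v₃ w : ℝ) (h3 : 0 ≤ v₃) (h32 : v₃ ≤ v₂) (h21 : v₂ ≤ v₁)
    (h1 : v₁ ≤ 1) (hw0 : 0 ≤ w) (hw1 : w ≤ 1) :
    2 * delta w v₁ v₂ ≥ delta (max v₂ w) v₁ v₃ + delta (max v₁ w) v₂ v₃ := by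
  unfold delta
  rcases le_total v₂ w with h2w | h2w <;> rcases le_total v₁ w with h1w | h1w <;>
    simp only [max_eq_left, max_eq_right, h2w, h1w] <;>
    split_ifs <;> linarith
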